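/- Let V be a vector space of dimension 2m (m ≥ 2) over an algebraically closed field K of characteristic zero, and let L_1, …, L_m be 2-dimensional subspaces with V = L_1 ⊕ ⋯ ⊕ L_m. For each i, let H_i be a nonzero alternating bilinear form on V with rad(H_i) ⊇ ⊕_{j≠i} L_j; set σ = span(H_1, …, H_m) and, for each i, F_i = span(H_j : j ≠ i), subspaces of the space of alternating bilinear forms on V. Then for a 2-dimensional subspace N of the space of alternating bilinear forms on V, the following are equivalent: (i) N ⊆ σ and N ∩ F_i ∩ F_j = {0} for all 1 ≤ i < j ≤ m; (ii) every nonzero A ∈ N has dim rad(A) ≤ 2, and the set of nonzero radicals {rad(A) : A ∈ N, A ≠ 0, rad(A) ≠ 0} is exactly {L_1, …, L_m}. -/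

import Mathlib

section aux
variable {K : Type*} [Field K] {V : Type*} [AddCommGroup V] [Module K V]

lemma skew_aux (A : V →ₗ[K] V →ₗ[K] K) (halt : ∀ v, A v v = 0) (u v : V) :
    A u v = - A v u := by
  have h := halt (u + v)
  simp only [map_add, LinearMap.add_apply, halt u, halt v, zero_add, add_zero] at h
  linear_combination h

lemma expand2_aux (A : V →ₗ[K] V →ₗ[K] K) (halt : ∀ v, A v v = 0)
    (a b a' b' : K) (x y : V) :
    A (a•x+b•y) (a'•x+b'•y) = (a*b' - b*a') * A x y := by
  have hsk : A x y + A y x = 0 := by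
    have h := halt (x + y)
    simp only [map_add, LinearMap.add_apply, halt x, halt y, zero_add, add_zero] at h
    linear_combination h
  simp only [map_add, map_smul, LinearMap.add_apply, LinearMap.smul_apply, smul_eq_mul, halt]
  linear_combination (b * a') * hsk

end aux

set_option maxHeartbeats 1000000 in
theorem statement12 (K : Type*) [Field K] [IsAlgClosed K] [CharZero K]
    (V : Type*) [AddCommGroup V] [Module K V] [FiniteDimensional K V]
    (m : ℕ) (hm : 2 ≤ m) (hV : Module.finrank K V = 2 * m)
    (L : Fin m → Submodule K V) (hL : ∀ i, Module.finrank K (L i) = 2)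
    (hdirect : DirectSum.IsInternal L)
    (H : Fin m → (V →ₗ[K] V →ₗ[K] K)) (hHne : ∀ i, H i ≠ 0)
    (hHalt : ∀ i, ∀ v, H i v v = 0)
    (hHrad : ∀ i, (⨆ (j : Fin m) (_ : j ≠ i), L j) ≤ LinearMap.ker (H i))
    (N : Submodule K (V →ₗ[K] V →ₗ[K] K))
    (hNalt : ∀ A ∈ N, ∀ v, A v v = 0) (hN2 : Module.finrank K N = 2) :
    (N ≤ Submodule.span K (Set.range H) ∧
      ∀ i j : Fin m, i ≠ j →
        N ⊓ Submodule.span K (H '' {k | k ≠ i}) ⊓ Submodule.span K (H '' {k | k ≠ j}) = ⊥)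
    ↔
    ((∀ A ∈ N, A ≠ 0 → Module.finrank K (LinearMap.ker A) ≤ 2) ∧
      {W : Submodule K V | ∃ A ∈ N, A ≠ 0 ∧ LinearMap.ker A ≠ ⊥ ∧ LinearMap.ker A = W} =
        Set.range L) := by
  classical
  set W : Fin m → Submodule K V := fun i => ⨆ (j : Fin m) (_ : j ≠ i), L j with hWdef
  have hsup : (⨆ i, L i) = ⊤ := hdirect.submodule_iSup_eq_top
  have hind : iSupIndep L := hdirect.submodule_iSupIndep
  have hLW : ∀ i j, j ≠ i → L j ≤ W i := by
    intro i j hj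
    exact le_iSup₂ (f := fun (j : Fin m) (_ : j ≠ i) => L j) j hj
  have hLker : ∀ i j, j ≠ i → L j ≤ LinearMap.ker (H i) :=
    fun i j hj => le_trans (hLW i j hj) (hHrad i)
  have hcompl : ∀ i, IsCompl (L i) (W i) := by
    intro i
    refine ⟨hind i, codisjoint_iff.mpr ?_⟩
    rw [eq_top_iff, ← hsup]
    refine iSup_le fun j => ?_
    by_cases hj : j = i
    · subst hj; exact le_sup_left
    · exact le_trans (hLW i j hj) le_sup_right
  -- existence of a hyperbolic pair in each L i
  have hef : ∀ i, ∃ e f, e ∈ L i ∧ f ∈ L i ∧ H i e f ≠ 0 := by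
    intro i
    have hne : ∃ u v, H i u v ≠ 0 := by
      by_contra h
      push_neg at h
      exact hHne i (by ext u v; simp [h])
    obtain ⟨u, v, huv⟩ := hne
    have hu : u ∈ L i ⊔ W i := by rw [(hcompl i).sup_eq_top]; trivial
    have hv : v ∈ L i ⊔ W i := by rw [(hcompl i).sup_eq_top]; trivial
    obtain ⟨e, he, w, hw, rfl⟩ := Submodule.mem_sup.1 hu
    obtain ⟨f, hf, w', hw', rfl⟩ := Submodule.mem_sup.1 hv
    refine ⟨e, f, he, hf, ?_⟩
    have h1 : H i w = 0 := hHrad i hw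
    have h2 : H i w' = 0 := hHrad i hw'
    have h3 : H i e w' = - H i w' e := skew_aux (H i) (hHalt i) e w'
    intro h
    apply huv
    simp [map_add, LinearMap.add_apply, h1, h3, h2, h]
  choose e f he hf hefne using hef
  have hfne0 : ∀ i, f i ≠ 0 := by
    intro i h
    exact hefne i (by rw [h]; simp)
  have hlin : ∀ i, LinearIndependent K ![e i, f i] := by
    intro i
    rw [LinearIndependent.pair_iff]
    intro s t hst
    have h1 : H i (s • e i + t • f i) (f i) = 0 := by rw [hst]; simp
    rw [map_add, map_smul, map_smul, LinearMap.add_apply, LinearMap.smul_apply,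
      LinearMap.smul_apply, hHalt i (f i)] at h1
    have hs : s = 0 := by
      have := h1
      simp only [smul_eq_mul, mul_zero, add_zero] at this
      exact (mul_eq_zero.1 this).resolve_right (hefne i)
    subst hs
    simp only [zero_smul, zero_add] at hst
    exact ⟨rfl, (smul_eq_zero.1 hst).resolve_right (hfne0 i)⟩
  have hspan : ∀ i, Submodule.span K {e i, f i} = L i := by
    intro i
    have hle : Submodule.span K {e i, f i} ≤ L i := by
      rw [Submodule.span_le, Set.insert_subset_iff, Set.singleton_subset_iff]
      exact ⟨he i, hf i⟩
    have hrange : Set.range ![e i, f i] = {e i, f i} := by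
      ext x
      simp [Fin.exists_fin_two]
      tauto
    have h2 : Module.finrank K (Submodule.span K {e i, f i}) = 2 := by
      rw [← hrange, finrank_span_eq_card (hlin i)]
      simp
    exact Submodule.eq_of_le_of_finrank_le hle (by rw [h2, hL i])
  -- any x in L i killed by H i is zero
  have hker2 : ∀ i, ∀ x ∈ L i, H i x = 0 → x = 0 := by
    intro i x hx hHx
    rw [← hspan i] at hx
    obtain ⟨a, b, rfl⟩ := Submodule.mem_span_pair.1 hx
    have h1 : a = 0 := by
      have := congrArg (fun g => g (f i)) hHx
      simp only [map_add, map_smul, LinearMap.add_apply, LinearMap.smul_apply,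
        hHalt i (f i), smul_eq_mul, mul_zero, add_zero, LinearMap.zero_apply] at this
      exact (mul_eq_zero.1 this).resolve_right (hefne i)
    have h2 : b = 0 := by
      have := congrArg (fun g => g (e i)) hHx
      have hfe : H i (f i) (e i) = - H i (e i) (f i) := skew_aux (H i) (hHalt i) _ _
      simp only [map_add, map_smul, LinearMap.add_apply, LinearMap.smul_apply,
        hHalt i (e i), smul_eq_mul, mul_zero, zero_add, LinearMap.zero_apply, hfe] at this
      rcases mul_eq_zero.1 this with h | h
      · exact h
      · exact absurd (neg_eq_zero.1 h) (hefne i)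
    rw [h1, h2]; simp
  have hkerW : ∀ i, LinearMap.ker (H i) ≤ W i := by
    intro i v hv
    have hv' : v ∈ L i ⊔ W i := by rw [(hcompl i).sup_eq_top]; trivial
    obtain ⟨x, hx, w, hw, rfl⟩ := Submodule.mem_sup.1 hv'
    have hxk : H i x = 0 := by
      have h1 : H i (x + w) = 0 := hv
      have h2 : H i w = 0 := hHrad i hw
      rw [map_add, h2, add_zero] at h1
      exact h1
    rw [hker2 i x hx hxk, zero_add]
    exact hw
  set π : ∀ i : Fin m, V →ₗ[K] L i := fun i => (L i).projectionOnto (W i) (hcompl i)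
    with hπdef
  have hπ0 : ∀ i v, v ∈ W i → π i v = 0 := by
    intro i v hv
    exact (Submodule.linearProjOfIsCompl_apply_eq_zero_iff (hcompl i)).2 hv
  have hπsum : ∀ v : V, (∑ j, ((π j v : V))) = v := by
    have key : (∑ j, (L j).subtype ∘ₗ π j) = LinearMap.id (R := K) (M := V) := by
      have hker : (⊤ : Submodule K V) ≤
          LinearMap.ker ((∑ j, (L j).subtype ∘ₗ π j) - LinearMap.id) := by
        rw [← hsup]
        refine iSup_le fun k => fun x hx => ?_
        rw [LinearMap.mem_ker, LinearMap.sub_apply, LinearMap.id_apply, sub_eq_zero,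
          LinearMap.sum_apply]
        rw [Finset.sum_eq_single k]
        · simp only [LinearMap.comp_apply, Submodule.coe_subtype]
          have : π k x = ⟨x, hx⟩ := by
            have := Submodule.linearProjOfIsCompl_apply_left (hcompl k) ⟨x, hx⟩
            simpa [hπdef] using this
          rw [this]
        · intro j _ hj
          have : π j x = 0 := hπ0 j x (hLW j k (fun h => hj h.symm) hx)
          simp [LinearMap.comp_apply, this]
        · intro h; exact absurd (Finset.mem_univ k) h
      have : (∑ j, (L j).subtype ∘ₗ π j) - LinearMap.id = 0 := by
        rw [← LinearMap.ker_eq_top]; exact top_le_iff.1 hker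
      exact sub_eq_zero.1 this
    intro v
    have := congrArg (fun g => g v) key
    simpa [LinearMap.sum_apply, LinearMap.comp_apply] using this
  -- evaluation of a combination against a vector in L j
  have hA_L : ∀ (c : Fin m → K) (v w : V) (j : Fin m), w ∈ L j →
      (∑ k, c k • H k) v w = c j * H j v w := by
    intro c v w j hw
    rw [LinearMap.sum_apply]
    simp only [LinearMap.smul_apply, smul_eq_mul]
    rw [LinearMap.sum_apply]
    simp only [LinearMap.smul_apply, smul_eq_mul]
    rw [Finset.sum_eq_single j]
    · intro k _ hk
      have hwk : H k w = 0 := hLker k j (by exact fun h => hk h.symm) hw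
      have : H k v w = - H k w v := skew_aux (H k) (hHalt k) v w
      rw [this, hwk]
      simp
    · intro h; exact absurd (Finset.mem_univ j) h
  constructor
  · -- (i) → (ii)
    rintro ⟨hσ, hF⟩
    have hrep : ∀ A ∈ N, ∃ c : Fin m → K, (∑ k, c k • H k) = A := fun A hA =>
      (Submodule.mem_span_range_iff_exists_fun K).1 (hσ hA)
    have hmemF : ∀ (c : Fin m → K) (i : Fin m), c i = 0 →
        (∑ k, c k • H k) ∈ Submodule.span K (H '' {k | k ≠ i}) := by
      intro c i hci
      refine Submodule.sum_mem _ fun k _ => ?_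
      by_cases hk : k = i
      · subst hk; rw [hci]; simp
      · exact Submodule.smul_mem _ _ (Submodule.subset_span ⟨k, hk, rfl⟩)
    have huniq : ∀ A ∈ N, A ≠ 0 → ∀ c : Fin m → K, (∑ k, c k • H k) = A →
        ∀ i j, i ≠ j → c i = 0 → c j = 0 → False := by
      intro A hA hA0 c hc i j hij hci hcj
      have hmem : A ∈ N ⊓ Submodule.span K (H '' {k | k ≠ i}) ⊓
          Submodule.span K (H '' {k | k ≠ j}) :=
        ⟨⟨hA, hc ▸ hmemF c i hci⟩, hc ▸ hmemF c j hcj⟩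
      rw [hF i j hij] at hmem
      exact hA0 ((Submodule.mem_bot K).1 hmem)
    have hkerπ : ∀ (c : Fin m → K) (v : V), v ∈ LinearMap.ker (∑ k, c k • H k) →
        ∀ j, c j ≠ 0 → π j v = 0 := by
      intro c v hv j hcj
      have hHv : H j v = 0 := by
        rw [← LinearMap.ker_eq_top, eq_top_iff, ← hsup]
        refine iSup_le fun l => fun w hw => ?_
        rw [LinearMap.mem_ker]
        by_cases hl : l = j
        · subst hl
          have h0 : (∑ k, c k • H k) v w = 0 := by
            rw [LinearMap.mem_ker] at hv; rw [hv]; simp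
          rw [hA_L c v w l hw] at h0
          exact (mul_eq_zero.1 h0).resolve_left hcj
        · have hwk : H j w = 0 := hLker j l hl hw
          rw [skew_aux (H j) (hHalt j) v w, hwk]; simp
      exact hπ0 j v (hkerW j (LinearMap.mem_ker.2 hHv))
    have hker_le : ∀ (c : Fin m → K) (i0 : Fin m), (∀ j, j ≠ i0 → c j ≠ 0) →
        LinearMap.ker (∑ k, c k • H k) ≤ L i0 := by
      intro c i0 hc v hv
      have hs : ∀ j ∈ Finset.univ, j ≠ i0 → ((π j v : V)) = 0 := by
        intro j _ hj
        rw [hkerπ c v hv j (hc j hj)]; rfl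
      have hv2 := hπsum v
      rw [Finset.sum_eq_single_of_mem i0 (Finset.mem_univ i0) hs] at hv2
      rw [← hv2]; exact (π i0 v).2
    have hker_bot : ∀ (c : Fin m → K), (∀ j, c j ≠ 0) →
        LinearMap.ker (∑ k, c k • H k) = ⊥ := by
      intro c hc
      rw [eq_bot_iff]; intro v hv
      have hs : ∀ j ∈ Finset.univ, ((π j v : V)) = 0 := by
        intro j _; rw [hkerπ c v hv j (hc j)]; rfl
      have hv2 := hπsum v
      rw [Finset.sum_eq_zero hs] at hv2
      simp [← hv2]
    have hcomb0 : ∀ (c : Fin m → K) (j : Fin m), c j = 0 →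
        L j ≤ LinearMap.ker (∑ k, c k • H k) := by
      intro c j hcj x hx
      rw [LinearMap.mem_ker]
      refine LinearMap.ext fun w => ?_
      rw [LinearMap.sum_apply, LinearMap.sum_apply]
      rw [LinearMap.zero_apply]
      refine Finset.sum_eq_zero fun k _ => ?_
      by_cases hk : k = j
      · subst hk; rw [hcj]; simp
      · have hxk : H k x = 0 := hLker k j (fun h => hk h.symm) hx
        simp [LinearMap.smul_apply, hxk]
    refine ⟨?_, ?_⟩
    · intro A hA hA0
      obtain ⟨c, hc⟩ := hrep A hA
      subst hc
      by_cases hz : ∃ i0, c i0 = 0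
      · obtain ⟨i0, hi0⟩ := hz
        have honly : ∀ j, j ≠ i0 → c j ≠ 0 := fun j hj hcj =>
          huniq _ hA hA0 c rfl j i0 hj hcj hi0
        calc Module.finrank K (LinearMap.ker (∑ k, c k • H k))
            ≤ Module.finrank K (L i0) := Submodule.finrank_mono (hker_le c i0 honly)
          _ = 2 := hL i0
      · push_neg at hz
        rw [hker_bot c hz, finrank_bot]
        omega
    · ext U
      simp only [Set.mem_setOf_eq, Set.mem_range]
      constructor
      · rintro ⟨A, hA, hA0, hkne, rfl⟩
        obtain ⟨c, hc⟩ := hrep A hA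
        subst hc
        have hz : ∃ i0, c i0 = 0 := by
          by_contra h; push_neg at h
          exact hkne (hker_bot c h)
        obtain ⟨i0, hi0⟩ := hz
        have honly : ∀ j, j ≠ i0 → c j ≠ 0 := fun j hj hcj =>
          huniq _ hA hA0 c rfl j i0 hj hcj hi0
        exact ⟨i0, (le_antisymm (hker_le c i0 honly) (hcomb0 c i0 hi0)).symm⟩
      · rintro ⟨i, rfl⟩
        set E : (V →ₗ[K] V →ₗ[K] K) →ₗ[K] K :=
          (LinearMap.applyₗ (f i)) ∘ₗ (LinearMap.applyₗ (e i)) with hEdef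
        set ψ : N →ₗ[K] K := E ∘ₗ N.subtype with hψdef
        have hkψ : LinearMap.ker ψ ≠ ⊥ := by
          intro h
          letI : AddCommGroup N := @Submodule.addCommGroup K (V →ₗ[K] V →ₗ[K] K) _ _ _ N
          have h1 := LinearMap.finrank_range_add_finrank_ker (K := K) (V := ↥N) (V₂ := K) ψ
          rw [h, finrank_bot K ↥N, add_zero, hN2] at h1
          have h2 : Module.finrank K (LinearMap.range ψ) ≤ 1 := by
            simpa using Submodule.finrank_le (LinearMap.range ψ)
          omega
        obtain ⟨x, hx, hx0⟩ := Submodule.exists_mem_ne_zero_of_ne_bot hkψ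
        have hA0 : (x : V →ₗ[K] V →ₗ[K] K) ≠ 0 := by
          intro h
          exact hx0 (Subtype.ext h)
        obtain ⟨c, hc⟩ := hrep (x : V →ₗ[K] V →ₗ[K] K) x.2
        have h0 : ((x : V →ₗ[K] V →ₗ[K] K)) (e i) (f i) = 0 := by
          have := hx
          rw [LinearMap.mem_ker, hψdef] at this
          simpa [hEdef] using this
        have hEc : c i * H i (e i) (f i) = 0 := by
          rw [← hc, hA_L c (e i) (f i) i (hf i)] at h0
          exact h0
        have hci : c i = 0 := (mul_eq_zero.1 hEc).resolve_right (hefne i)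
        have honly : ∀ j, j ≠ i → c j ≠ 0 := fun j hj hcj =>
          huniq _ x.2 hA0 c hc j i hj hcj hci
        have hkeq : LinearMap.ker (x : V →ₗ[K] V →ₗ[K] K) = L i :=
          le_antisymm (hc ▸ hker_le c i honly) (hc ▸ hcomb0 c i hci)
        have hLbot : L i ≠ ⊥ := by
          intro h
          have h2 := hL i
          rw [h, finrank_bot] at h2
          omega
        exact ⟨x, x.2, hA0, by rw [hkeq]; exact hLbot, hkeq⟩
  · -- (ii) → (i)
    rintro ⟨hdim, hrad⟩
    have hAex : ∀ i, ∃ A, A ∈ N ∧ A ≠ 0 ∧ LinearMap.ker A = L i := by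
      intro i
      have hmem : L i ∈ {U : Submodule K V |
          ∃ A ∈ N, A ≠ 0 ∧ LinearMap.ker A ≠ ⊥ ∧ LinearMap.ker A = U} := by
        rw [hrad]; exact ⟨i, rfl⟩
      obtain ⟨A, hA, hA0, _, hk⟩ := hmem
      exact ⟨A, hA, hA0, hk⟩
    choose A hAN hA0 hAker using hAex
    have hdisj : ∀ i j, i ≠ j → Disjoint (L i) (L j) := by
      intro i j hij
      exact (hind i).mono_right (hLW i j (fun h => hij h.symm))
    have hLL : ∀ i j, i ≠ j → L i ≠ L j := by
      intro i j hij h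
      have hbot : L i = ⊥ := by
        have hd := hdisj i j hij
        rw [← h] at hd
        exact disjoint_self.1 hd
      have h2 := hL i
      rw [hbot, finrank_bot] at h2
      omega
    have hApair : ∀ i j, i ≠ j → LinearIndependent K ![A i, A j] := by
      intro i j hij
      rw [LinearIndependent.pair_iff (M := V →ₗ[K] V →ₗ[K] K)]
      intro s t hst
      by_cases hs : s = 0
      · subst hs; rw [zero_smul, zero_add] at hst
        exact ⟨rfl, (smul_eq_zero.1 hst).resolve_right (hA0 j)⟩
      · exfalso
        by_cases ht : t = 0
        · rw [ht, zero_smul, add_zero] at hst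
          exact hs ((smul_eq_zero.1 hst).resolve_right (hA0 i))
        · have hAi : A i = (s⁻¹ * -t) • A j := by
            have h1 : s • A i = -(t • A j) := eq_neg_of_add_eq_zero_left (G := V →ₗ[K] V →ₗ[K] K) hst
            rw [← smul_smul, neg_smul (M := V →ₗ[K] V →ₗ[K] K), ← h1, smul_smul, inv_mul_cancel₀ hs, one_smul]
          have hker_eq : LinearMap.ker (A i) = LinearMap.ker (A j) := by
            rw [hAi, LinearMap.ker_smul _ _
              (mul_ne_zero (inv_ne_zero hs) (neg_ne_zero.2 ht))]
          rw [hAker i, hAker j] at hker_eq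
          exact hLL i j hij hker_eq
    have hNpair : ∀ (i j : Fin m), i ≠ j → ∀ B ∈ N, ∃ a b : K, a • A i + b • A j = B := by
      intro i j hij B hB
      have hle : Submodule.span K {A i, A j} ≤ N := by
        rw [Submodule.span_le, Set.insert_subset_iff, Set.singleton_subset_iff]
        exact ⟨hAN i, hAN j⟩
      have hrange : Set.range ![A i, A j] = {A i, A j} := by
        ext x; simp [Fin.exists_fin_two]; tauto
      have hfr : Module.finrank K (Submodule.span K {A i, A j}) = 2 := by
        rw [← hrange, finrank_span_eq_card (hApair i j hij)]; simp
      have heq : Submodule.span K {A i, A j} = N :=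
        Submodule.eq_of_le_of_finrank_le (V := V →ₗ[K] V →ₗ[K] K) hle (le_of_eq (hN2.trans hfr.symm))
      rw [← heq] at hB
      exact Submodule.mem_span_pair.1 hB
    have hblock : ∀ B ∈ N, ∀ i j, i ≠ j → ∀ u ∈ L i, ∀ v ∈ L j, B u v = 0 := by
      intro B hB i j hij u hu v hv
      obtain ⟨a, b, hab⟩ := hNpair i j hij B hB
      have h1 : A i u = 0 := by rw [← hAker i] at hu; exact hu
      have h2 : A j u v = 0 := by
        have hv' : A j v = 0 := by rw [← hAker j] at hv; exact hv
        rw [skew_aux (A j) (hNalt (A j) (hAN j)) u v, hv']; simp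
      rw [← hab]
      simp [LinearMap.add_apply, LinearMap.smul_apply, h1, h2]
    constructor
    · intro B hB
      rw [Submodule.mem_span_range_iff_exists_fun K]
      set c : Fin m → K := fun k => B (e k) (f k) * (H k (e k) (f k))⁻¹ with hcdef
      refine ⟨c, ?_⟩
      have key : ∀ (kk ll : Fin m) (u : V), u ∈ L kk → ∀ v ∈ L ll,
          (∑ k, c k • H k) u v = B u v := by
        intro kk ll u hu v hv
        rw [hA_L c u v ll hv]
        by_cases hkl : kk = ll
        · subst hkl
          have hu' := hu; have hv' := hv
          rw [← hspan kk] at hu' hv'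
          obtain ⟨a, b, rfl⟩ := Submodule.mem_span_pair.1 hu'
          obtain ⟨a', b', rfl⟩ := Submodule.mem_span_pair.1 hv'
          rw [expand2_aux (H kk) (hHalt kk) a b a' b' (e kk) (f kk),
            expand2_aux B (hNalt B hB) a b a' b' (e kk) (f kk)]
          have hne := hefne kk
          rw [hcdef]
          field_simp
        · have h1 : H ll u = 0 := hLker ll kk hkl hu
          have h2 : B u v = 0 := hblock B hB kk ll hkl u hu v hv
          rw [h2, h1]; simp
      have hD : (B - ∑ k, c k • H k) = 0 := by
        rw [← LinearMap.ker_eq_top, eq_top_iff, ← hsup]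
        refine iSup_le fun kk => fun u hu => ?_
        rw [LinearMap.mem_ker]
        rw [← LinearMap.ker_eq_top, eq_top_iff, ← hsup]
        refine iSup_le fun ll => fun v hv => ?_
        rw [LinearMap.mem_ker, LinearMap.sub_apply, LinearMap.sub_apply,
          key kk ll u hu v hv, sub_self]
      have := (sub_eq_zero (G := V →ₗ[K] V →ₗ[K] K)).1 hD
      exact this.symm
    · intro i j hij
      rw [eq_bot_iff]
      intro B hB
      obtain ⟨⟨hBN, hBi⟩, hBj⟩ := hB
      rw [Submodule.mem_bot]
      by_contra hB0
      have hvanish : ∀ (i0 : Fin m), ∀ T ∈ Submodule.span K (H '' {k | k ≠ i0}),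
          ∀ x ∈ L i0, T x = 0 := by
        intro i0 T hT
        induction hT using Submodule.span_induction with
        | mem T hT =>
          obtain ⟨k, hk, rfl⟩ := hT
          intro x hx
          exact hLker k i0 (fun h => hk h.symm) hx
        | zero => intro x _; simp
        | add T1 T2 _ _ ih1 ih2 =>
          intro x hx
          rw [LinearMap.add_apply, ih1 x hx, ih2 x hx, add_zero]
        | smul a T _ ih =>
          intro x hx
          rw [LinearMap.smul_apply, ih x hx, smul_zero]
      have hsub : L i ⊔ L j ≤ LinearMap.ker B := by
        refine sup_le ?_ ?_
        · intro x hx; exact LinearMap.mem_ker.2 (hvanish i B hBi x hx)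
        · intro x hx; exact LinearMap.mem_ker.2 (hvanish j B hBj x hx)
      have h4 : Module.finrank K ↥(L i ⊔ L j) = 4 := by
        have hfs := Submodule.finrank_sup_add_finrank_inf_eq (L i) (L j)
        rw [(hdisj i j hij).eq_bot, finrank_bot, hL i, hL j] at hfs
        omega
      have hle4 : 4 ≤ Module.finrank K (LinearMap.ker B) := by
        rw [← h4]; exact Submodule.finrank_mono hsub
      have := hdim B hBN hB0
      omega
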